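/- Let a, b, m, n, d be positive integers with d = m·a = n·b. Consider the action of ℂ* on ℂ² \ {0} given by t·(x,y) = (t^a x, t^b y). Then the set of orbits of solutions of x^m + y^n = 0 in ℂ² \ {0} has exactly d/lcm(a,b) elements. -/

import Mathlib

lemma card_pow_eq_neg_one {k : ℕ} (hk : 0 < k) : Nat.card {z : ℂ // z ^ k = -1} = k := by
  have hζ := Complex.isPrimitiveRoot_exp k hk.ne'
  have hex : ∃ α : ℂ, α ^ k = -1 := IsAlgClosed.exists_pow_nat_eq (-1) hk
  have hnodup := hζ.nthRoots_nodup (a := (-1 : ℂ)) (by norm_num)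
  have hset : {z : ℂ | z ^ k = -1} = ↑(Polynomial.nthRoots k (-1 : ℂ)).toFinset := by
    ext z; simp [Polynomial.mem_nthRoots hk]
  have h1 : Nat.card {z : ℂ // z ^ k = -1} = Set.ncard {z : ℂ | z ^ k = -1} :=
    Nat.card_coe_set_eq _
  rw [h1, hset, Set.ncard_coe_finset, Multiset.toFinset_card_of_nodup hnodup,
    hζ.card_nthRoots, if_pos hex]

lemma aux_root {a b : ℕ} (ha : 0 < a) (hb : 0 < b) (u : ℂ)
    (hu : u ^ (b / Nat.gcd a b) = 1) : ∃ t : ℂ, t ^ b = 1 ∧ t ^ a = u := by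
  set g := Nat.gcd a b with hgdef
  have hg : 0 < g := Nat.gcd_pos_of_pos_left b ha
  set a' := a / g with ha'def
  set b' := b / g with hb'def
  have hag : a = g * a' := (Nat.mul_div_cancel' (Nat.gcd_dvd_left a b)).symm
  have hbg : b = g * b' := (Nat.mul_div_cancel' (Nat.gcd_dvd_right a b)).symm
  have hb' : 0 < b' := Nat.div_pos (Nat.le_of_dvd hb (Nat.gcd_dvd_right a b)) hg
  have hu0 : u ≠ 0 := by
    intro h; rw [h, zero_pow hb'.ne'] at hu; exact zero_ne_one hu
  have hcop : IsCoprime (a' : ℤ) (b' : ℤ) :=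
    Int.isCoprime_iff_gcd_eq_one.mpr (by
      exact_mod_cast Nat.coprime_div_gcd_div_gcd hg)
  obtain ⟨α, β, hbez⟩ := hcop
  set v : ℂ := u ^ α with hvdef
  have huz : u ^ (b' : ℤ) = 1 := by rw [zpow_natCast]; exact hu
  have hv1 : v ^ b' = 1 := by
    rw [hvdef, ← zpow_natCast, ← zpow_mul, mul_comm, zpow_mul, huz, one_zpow]
  have hv2 : v ^ a' = u := by
    have h1 : (α * a' : ℤ) = 1 - β * b' := by linarith [hbez]
    rw [hvdef, ← zpow_natCast, ← zpow_mul, h1, zpow_sub₀ hu0, zpow_one, mul_comm β,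
      zpow_mul, huz, one_zpow, div_one]
  obtain ⟨t, ht⟩ := IsAlgClosed.exists_pow_nat_eq v hg
  exact ⟨t, by rw [hbg, pow_mul, ht, hv1], by rw [hag, pow_mul, ht, hv2]⟩

/-- The number of ℂ*-orbits (with weights `(a,b)`) of solutions of `x^m + y^n = 0`
in `ℂ² \ {0}`, where `d = m·a = n·b`, is `d / lcm(a,b)`. -/
theorem stmt_5 (a b m n d : ℕ) (ha : 0 < a) (hb : 0 < b) (hm : 0 < m) (hn : 0 < n)
    (hd : 0 < d) (hma : d = m * a) (hnb : d = n * b) :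
    Nat.card (Quot (fun (p q : {p : ℂ × ℂ // p ≠ 0 ∧ p.1 ^ m + p.2 ^ n = 0}) =>
      ∃ t : ℂˣ, q.1.1 = (t : ℂ) ^ a * p.1.1 ∧ q.1.2 = (t : ℂ) ^ b * p.1.2))
      = d / Nat.lcm a b := by
  set g := Nat.gcd a b with hgdef
  have hg : 0 < g := Nat.gcd_pos_of_pos_left b ha
  set a' := a / g with ha'def
  set b' := b / g with hb'def
  have hag : a = g * a' := (Nat.mul_div_cancel' (Nat.gcd_dvd_left a b)).symm
  have hbg : b = g * b' := (Nat.mul_div_cancel' (Nat.gcd_dvd_right a b)).symm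
  have ha' : 0 < a' := Nat.div_pos (Nat.le_of_dvd ha (Nat.gcd_dvd_left a b)) hg
  have hb' : 0 < b' := Nat.div_pos (Nat.le_of_dvd hb (Nat.gcd_dvd_right a b)) hg
  have hab' : a * b' = b * a' := by rw [hag, hbg]; ring
  have hlcm : Nat.lcm a b = a * b' := by
    have h0 : Nat.lcm a b = a * b / g := rfl
    rw [h0, hbg, show a * (g * b') = a * b' * g by ring, Nat.mul_div_cancel _ hg]
  have hdvd : Nat.lcm a b ∣ d :=
    Nat.lcm_dvd ⟨m, by rw [hma, mul_comm]⟩ ⟨n, by rw [hnb, mul_comm]⟩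
  set k := d / Nat.lcm a b with hkdef
  have hdk : d = k * Nat.lcm a b := (Nat.div_mul_cancel hdvd).symm
  have hk0 : 0 < k :=
    Nat.div_pos (Nat.le_of_dvd hd hdvd) (Nat.pos_of_ne_zero (Nat.lcm_ne_zero ha.ne' hb.ne'))
  have hm' : m = k * b' := by
    have h1 : m * a = k * b' * a := by
      rw [← hma, hdk, hlcm]; ring
    exact Nat.eq_of_mul_eq_mul_right ha h1
  have hn' : n = k * a' := by
    have h1 : n * b = k * a' * b := by
      rw [← hnb, hdk, hlcm, hab']; ring
    exact Nat.eq_of_mul_eq_mul_right hb h1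
  -- nonvanishing of coordinates
  have hF : ∀ p : {p : ℂ × ℂ // p ≠ 0 ∧ p.1 ^ m + p.2 ^ n = 0},
      p.1.1 ≠ 0 ∧ p.1.2 ≠ 0 := by
    rintro ⟨⟨x, y⟩, hne, heq⟩
    simp only at heq ⊢
    constructor
    · intro hx
      rw [hx, zero_pow hm.ne', zero_add] at heq
      have hy : y = 0 := pow_eq_zero_iff hn.ne' |>.mp heq
      exact hne (by simp [Prod.ext_iff, hx, hy])
    · intro hy
      rw [hy, zero_pow hn.ne', add_zero] at heq
      have hx : x = 0 := pow_eq_zero_iff hm.ne' |>.mp heq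
      exact hne (by simp [Prod.ext_iff, hx, hy])
  -- the invariant has k-th power -1
  have hFk : ∀ p : {p : ℂ × ℂ // p ≠ 0 ∧ p.1 ^ m + p.2 ^ n = 0},
      (p.1.1 ^ b' * (p.1.2)⁻¹ ^ a') ^ k = -1 := by
    intro p
    obtain ⟨hx, hy⟩ := hF p
    obtain ⟨-, heq⟩ := p.2
    have hxm : p.1.1 ^ m = -(p.1.2 ^ n) := eq_neg_of_add_eq_zero_left heq
    have hyn : p.1.2 ^ n ≠ 0 := pow_ne_zero _ hy
    rw [mul_pow, ← pow_mul, ← pow_mul, show b' * k = m by rw [hm']; ring,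
      show a' * k = n by rw [hn']; ring, inv_pow, hxm]
    field_simp
  -- invariance under the action
  have hinv : ∀ (t : ℂˣ) (x y : ℂ),
      ((t : ℂ) ^ a * x) ^ b' * (((t : ℂ) ^ b * y)⁻¹) ^ a' = x ^ b' * y⁻¹ ^ a' := by
    intro t x y
    have ht : (t : ℂ) ≠ 0 := t.ne_zero
    have h1 : ((t : ℂ) ^ b * y)⁻¹ = ((t : ℂ)⁻¹) ^ b * y⁻¹ := by rw [mul_inv, inv_pow]
    rw [h1, mul_pow, mul_pow, ← pow_mul, ← pow_mul, hab']
    have h2 : (t : ℂ) ^ (b * a') * ((t : ℂ)⁻¹) ^ (b * a') = 1 := by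
      rw [← mul_pow, mul_inv_cancel₀ ht, one_pow]
    calc (t : ℂ) ^ (b * a') * x ^ b' * (((t : ℂ)⁻¹) ^ (b * a') * y⁻¹ ^ a')
        = ((t : ℂ) ^ (b * a') * ((t : ℂ)⁻¹) ^ (b * a')) * (x ^ b' * y⁻¹ ^ a') := by ring
      _ = x ^ b' * y⁻¹ ^ a' := by rw [h2, one_mul]
  have hcard : Nat.card (Quot (fun (p q : {p : ℂ × ℂ // p ≠ 0 ∧ p.1 ^ m + p.2 ^ n = 0}) =>
      ∃ t : ℂˣ, q.1.1 = (t : ℂ) ^ a * p.1.1 ∧ q.1.2 = (t : ℂ) ^ b * p.1.2))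
      = Nat.card {z : ℂ // z ^ k = -1} := by
    apply Nat.card_congr
    refine Equiv.ofBijective
      (Quot.lift (fun p => (⟨p.1.1 ^ b' * (p.1.2)⁻¹ ^ a', hFk p⟩ : {z : ℂ // z ^ k = -1}))
        ?_) ⟨?_, ?_⟩
    · rintro p q ⟨t, ht1, ht2⟩
      apply Subtype.ext
      show p.1.1 ^ b' * (p.1.2)⁻¹ ^ a' = q.1.1 ^ b' * (q.1.2)⁻¹ ^ a'
      rw [ht1, ht2, hinv]
    · -- injectivity
      intro u v h
      obtain ⟨p, rfl⟩ := Quot.exists_rep u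
      obtain ⟨q, rfl⟩ := Quot.exists_rep v
      apply Quot.sound
      have hFpq : p.1.1 ^ b' * (p.1.2)⁻¹ ^ a' = q.1.1 ^ b' * (q.1.2)⁻¹ ^ a' :=
        congrArg Subtype.val h
      obtain ⟨hx, hy⟩ := hF p
      obtain ⟨hx', hy'⟩ := hF q
      obtain ⟨s, hs⟩ := IsAlgClosed.exists_pow_nat_eq (q.1.2 / p.1.2) hb
      have hs0 : s ≠ 0 := by
        intro h0
        rw [h0, zero_pow hb.ne'] at hs
        exact div_ne_zero hy' hy hs.symm
      have hsx : s ^ a * p.1.1 ≠ 0 := mul_ne_zero (pow_ne_zero _ hs0) hx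
      set u0 : ℂ := q.1.1 / (s ^ a * p.1.1) with hu0def
      have hub' : u0 ^ b' = 1 := by
        have h2 : (s ^ a) ^ b' = (q.1.2 / p.1.2) ^ a' := by
          rw [← pow_mul, hab', pow_mul, hs]
        rw [hu0def, div_pow, mul_pow, h2, div_eq_one_iff_eq
          (mul_ne_zero (pow_ne_zero _ (div_ne_zero hy' hy)) (pow_ne_zero _ hx))]
        rw [inv_pow, inv_pow] at hFpq
        rw [div_pow]
        have h3 : (q.1.2 ^ a')⁻¹ * q.1.2 ^ a' = 1 := inv_mul_cancel₀ (pow_ne_zero _ hy')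
        linear_combination (-(q.1.2 ^ a')) * hFpq + (-(q.1.1 ^ b')) * h3
      obtain ⟨t₀, ht₀b, ht₀a⟩ := aux_root ha hb u0 hub'
      have ht₀0 : t₀ ≠ 0 := by
        intro h0; rw [h0, zero_pow hb.ne'] at ht₀b; exact zero_ne_one ht₀b
      refine ⟨Units.mk0 (t₀ * s) (mul_ne_zero ht₀0 hs0), ?_, ?_⟩
      · rw [Units.val_mk0, mul_pow, ht₀a, hu0def]
        field_simp
      · rw [Units.val_mk0, mul_pow, ht₀b, one_mul, hs, div_mul_cancel₀ _ hy]
    · -- surjectivity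
      rintro ⟨z, hz⟩
      have hz0 : z ≠ 0 := by
        intro h0; rw [h0, zero_pow hk0.ne'] at hz
        exact (by norm_num : (0 : ℂ) ≠ -1) hz
      obtain ⟨x, hx⟩ := IsAlgClosed.exists_pow_nat_eq z hb'
      have hx0 : x ≠ 0 := by
        intro h0; rw [h0, zero_pow hb'.ne'] at hx; exact hz0 hx.symm
      have hxm : x ^ m = -1 := by
        rw [hm', mul_comm k b', pow_mul, hx, hz]
      refine ⟨Quot.mk _ ⟨(x, 1), ⟨by simp [Prod.ext_iff], by simp [hxm]⟩⟩, ?_⟩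
      exact Subtype.ext (by simp [hx])
  rw [hcard, card_pow_eq_neg_one hk0]
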